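/- Let n ≥ 1, let g ∈ F_q[t] be monic with deg g ≤ n − ⌊n/2⌋, and set s = n − ⌊n/2⌋ − deg g ≥ 0. Then the set S_{s,g} = { t^{⌊n/2⌋} g b₁ + b₂ : b₁ ∈ F_q[t] monic with deg b₁ = s, b₂ ∈ F_q[t] with deg b₂ < deg g } consists of monic polynomials of degree n, and every monic polynomial of degree n is R_{s,g}-equivalent to exactly one element of S_{s,g}. -/

import Mathlib

/-!
Common setup: `F_q((1/t))` is realized as `LaurentSeries Fq` (formal Laurent series in `X`)
under the identification `X = 1/t`; thus the coefficient of `t^i` is the coefficient of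
`X^(-i)`, and `𝕋` consists of series supported on positive powers of `X`.
-/

open Polynomial
open scoped Classical

/-- The element `t` of `F_q((1/t))`, i.e. the Laurent series `X⁻¹`. -/
noncomputable def tElem (Fq : Type) [Field Fq] : LaurentSeries Fq :=
  HahnSeries.single (-1 : ℤ) 1

/-- The natural embedding of `F_q[t]` into `F_q((1/t))`: evaluate the polynomial at `t`. -/
noncomputable def toL {Fq : Type} [Field Fq] (f : Polynomial Fq) : LaurentSeries Fq :=
  Polynomial.aeval (tElem Fq) f

/-- The norm on `F_q((1/t))`: `|x| = q^j` where `j` is the largest index with `x_j ≠ 0`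
(in `t`-coefficients, so `j = -(order of the Hahn series)`), and `|0| = 0`. -/
noncomputable def nrm {Fq : Type} [Field Fq] [Fintype Fq] (x : LaurentSeries Fq) : ℝ :=
  if x = 0 then 0 else (Fintype.card Fq : ℝ) ^ (-(HahnSeries.order x))

/-- `𝕋 = {∑_{i<0} x_i t^i}`: Laurent series supported on negative powers of `t`. -/
def TT (Fq : Type) [Field Fq] : Set (LaurentSeries Fq) :=
  {x | ∀ n : ℤ, n ≤ 0 → x.coeff n = 0}

/-- The exponential `e_q(x) = ψ(x_{-1})`, where `ψ(y) = e^{2πi·tr(y)/p}` with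
`tr : F_q → F_p` the field trace, and `x_{-1}` is the coefficient of `t^{-1}` in `x`
(the coefficient of `X^1` of the Hahn series). -/
noncomputable def eQ {Fq : Type} [Field Fq] [Fintype Fq] (p : ℕ) [CharP Fq p]
    (x : LaurentSeries Fq) : ℂ :=
  letI := ZMod.algebra Fq p
  Complex.exp (2 * Real.pi * Complex.I *
    (((Algebra.trace (ZMod p) Fq (x.coeff 1)).val : ℂ) / (p : ℂ)))

/-- The Möbius function on `F_q[t]`: `μ(f) = (-1)^r` if `f` is a product of `r` distinct
irreducibles, and `μ(f) = 0` otherwise. -/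
noncomputable def mu {Fq : Type} [Field Fq] (f : Polynomial Fq) : ℤ :=
  if Squarefree f then
    (-1) ^ Multiset.card (UniqueFactorizationMonoid.normalizedFactors f)
  else 0

/-- The monic polynomial `X^n + ∑_{i<n} c_i X^i`; monic polynomials of degree `n`
are exactly the `stdPoly n c` for a unique `c : Fin n → Fq`. -/
noncomputable def stdPoly {Fq : Type} [Field Fq] (n : ℕ) (c : Fin n → Fq) : Polynomial Fq :=
  X ^ n + ∑ i : Fin n, C (c i) * X ^ (i : ℕ)

/-- The polynomial `∑_{i<k} c_i X^i` of degree `< k`. -/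
noncomputable def ltPoly {Fq : Type} [Field Fq] (k : ℕ) (c : Fin k → Fq) : Polynomial Fq :=
  ∑ i : Fin k, C (c i) * X ^ (i : ℕ)

/-- Hayes' relation `R_{s,g}` on monic polynomials:
`a ≡ b mod R_{s,g}` iff `g ∣ a - b` and `|a/t^{deg a} - b/t^{deg b}| < q^{-s}`.
(Here `1/t^{deg a}` is the Laurent series `X^{deg a}`.) -/
def Requiv {Fq : Type} [Field Fq] [Fintype Fq] (s : ℕ) (g a b : Polynomial Fq) : Prop :=
  g ∣ (a - b) ∧
  nrm (toL a * HahnSeries.single (a.natDegree : ℤ) 1 -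
        toL b * HahnSeries.single (b.natDegree : ℤ) 1)
    < (Fintype.card Fq : ℝ) ^ (-(s : ℤ))

/-- `φ(g)`: the number of invertible residue classes modulo `g`. -/
noncomputable def phi {Fq : Type} [Field Fq] (g : Polynomial Fq) : ℕ :=
  Nat.card ((Polynomial Fq ⧸ Ideal.span {g})ˣ)

/-- `χ` is (the extension by zero of) a character of the unit group `R*_{s,g}` of the quotient
monoid of monic polynomials modulo `R_{s,g}`: it vanishes off monic polynomials, it is
multiplicative on monic polynomials, it is constant on `R_{s,g}`-classes, and it vanishes at a
monic polynomial exactly when that polynomial is not coprime to `g`.  (Such functions correspond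
bijectively to the characters of the finite abelian group `R*_{s,g}`.) -/
def IsRChar {Fq : Type} [Field Fq] [Fintype Fq] (s : ℕ) (g : Polynomial Fq)
    (χ : Polynomial Fq → ℂ) : Prop :=
  (∀ f : Polynomial Fq, ¬ f.Monic → χ f = 0) ∧
  (∀ a b : Polynomial Fq, a.Monic → b.Monic → χ (a * b) = χ a * χ b) ∧
  (∀ a b : Polynomial Fq, a.Monic → b.Monic → Requiv s g a b → χ a = χ b) ∧
  (∀ f : Polynomial Fq, f.Monic → (χ f = 0 ↔ ¬ IsCoprime f g))

section Aux
variable {Fq : Type} [Field Fq]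

lemma tElem_pow (i : ℕ) : (tElem Fq) ^ i = HahnSeries.single (-(i : ℤ)) 1 := by
  rw [tElem, HahnSeries.single_pow]
  simp

lemma toL_coeff (d : Polynomial Fq) (k : ℤ) :
    (toL d).coeff k = if k ≤ 0 then d.coeff (-k).toNat else 0 := by
  induction d using Polynomial.induction_on' with
  | add p q hp hq =>
    rw [toL, map_add, HahnSeries.coeff_add]
    rw [toL] at hp hq
    rw [hp, hq, Polynomial.coeff_add]
    split <;> simp
  | monomial i a =>
    rw [toL, Polynomial.aeval_monomial, tElem_pow]
    have halg : (algebraMap Fq (LaurentSeries Fq)) a = HahnSeries.single (0 : ℤ) a := by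
      rw [HahnSeries.algebraMap_apply']
      have : algebraMap Fq (PowerSeries Fq) a = PowerSeries.C a := rfl
      rw [this, HahnSeries.ofPowerSeries_C]
      rfl
    rw [halg, HahnSeries.single_mul_single, zero_add, mul_one, HahnSeries.coeff_single]
    rw [Polynomial.coeff_monomial]
    by_cases hk : k = -(i : ℤ)
    · rw [if_pos hk, if_pos (by omega), if_pos (by omega)]
    · rw [if_neg hk]
      split
      · rw [if_neg (by omega)]
      · rfl


lemma key_coeff (d : Polynomial Fq) (n : ℕ) (k : ℤ) :
    (toL d * HahnSeries.single (n : ℤ) 1).coeff k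
      = if k ≤ (n : ℤ) then d.coeff ((n : ℤ) - k).toNat else 0 := by
  have h := HahnSeries.coeff_mul_single_add (r := (1 : Fq)) (x := toL d)
    (a := k - (n : ℤ)) (b := (n : ℤ))
  rw [sub_add_cancel] at h
  rw [h, mul_one, toL_coeff]
  by_cases hk : k ≤ (n : ℤ)
  · rw [if_pos (by omega), if_pos hk]
    congr 1
    omega
  · rw [if_neg (by omega), if_neg hk]

lemma key_ne_zero {d : Polynomial Fq} (hd : d ≠ 0) (n : ℕ) :
    toL d * HahnSeries.single (n : ℤ) 1 ≠ 0 := by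
  intro h
  have h2 := key_coeff d n ((n : ℤ) - d.natDegree)
  rw [h, HahnSeries.coeff_zero] at h2
  have : ((n : ℤ) - ((n : ℤ) - d.natDegree)).toNat = d.natDegree := by omega
  rw [if_pos (by omega), this] at h2
  exact Polynomial.leadingCoeff_ne_zero.mpr hd h2.symm

lemma key_order {d : Polynomial Fq} (hd : d ≠ 0) (n : ℕ) :
    (toL d * HahnSeries.single (n : ℤ) 1).order = (n : ℤ) - d.natDegree := by
  have hx0 : toL d * HahnSeries.single (n : ℤ) 1 ≠ 0 := key_ne_zero hd n
  have hle : (toL d * HahnSeries.single (n : ℤ) 1).order ≤ (n : ℤ) - d.natDegree := by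
    apply HahnSeries.order_le_of_coeff_ne_zero
    rw [key_coeff, if_pos (by omega)]
    have : ((n : ℤ) - ((n : ℤ) - d.natDegree)).toNat = d.natDegree := by omega
    rw [this]
    exact Polynomial.leadingCoeff_ne_zero.mpr hd
  refine le_antisymm hle ?_
  by_contra hlt
  rw [not_le] at hlt
  have h1 := mt HahnSeries.coeff_order_eq_zero.mp hx0
  rw [key_coeff, if_pos (by omega)] at h1
  exact h1 (Polynomial.coeff_eq_zero_of_natDegree_lt (by omega))

lemma requiv_iff [Fintype Fq] {s n : ℕ} (hsn : s ≤ n) (g f b : Polynomial Fq)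
    (hf : f.natDegree = n) (hb : b.natDegree = n) :
    Requiv s g f b ↔ g ∣ f - b ∧ (f - b).degree < ((n - s : ℕ) : WithBot ℕ) := by
  unfold Requiv
  rw [hf, hb]
  have hsub : toL f * HahnSeries.single (n : ℤ) 1 - toL b * HahnSeries.single (n : ℤ) 1
      = toL (f - b) * HahnSeries.single (n : ℤ) 1 := by
    rw [toL, toL, toL, map_sub, sub_mul]
  rw [hsub]
  have hq1 : (1 : ℝ) < (Fintype.card Fq : ℝ) := by exact_mod_cast Fintype.one_lt_card
  refine and_congr_right fun _ => ?_
  by_cases hd : f - b = 0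
  · rw [hd]
    have h0 : toL (0 : Polynomial Fq) * HahnSeries.single (n : ℤ) 1 = 0 := by
      rw [toL, map_zero, zero_mul]
    rw [h0, nrm, if_pos rfl]
    simp only [Polynomial.degree_zero]
    constructor
    · intro _; exact WithBot.bot_lt_coe _
    · intro _; exact zpow_pos (by linarith) _
  · rw [nrm, if_neg (key_ne_zero hd n), key_order hd n,
      show -((n : ℤ) - (f - b).natDegree) = (((f - b).natDegree : ℤ) - n) by ring,
      zpow_lt_zpow_iff_right₀ hq1, ← Polynomial.natDegree_lt_iff_degree_lt hd]
    constructor <;> intro h <;> omega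

end Aux

/-- The set `S_{s,g} = {t^{⌊n/2⌋} g b₁ + b₂ : b₁ monic of degree s,
deg b₂ < deg g}` (with `s = n - ⌊n/2⌋ - deg g`) consists of monic polynomials of degree `n`,
and every monic polynomial of degree `n` is `R_{s,g}`-equivalent to exactly one element of it. -/
theorem representatives_complete
    (Fq : Type) [Field Fq] [Fintype Fq] (n : ℕ) (hn : 1 ≤ n)
    (g : Polynomial Fq) (hg : g.Monic) (hdeg : g.natDegree ≤ n - n / 2)
    (s : ℕ) (hs : s = n - n / 2 - g.natDegree)
    (S : Set (Polynomial Fq))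
    (hS : S = {f : Polynomial Fq | ∃ b₁ b₂ : Polynomial Fq,
      b₁.Monic ∧ b₁.natDegree = s ∧ b₂.degree < g.degree ∧
      f = X ^ (n / 2) * g * b₁ + b₂}) :
    (∀ f ∈ S, f.Monic ∧ f.natDegree = n) ∧
    (∀ f : Polynomial Fq, f.Monic → f.natDegree = n →
      ∃! b : Polynomial Fq, b ∈ S ∧ Requiv s g f b) := by
  have part1 : ∀ f ∈ S, f.Monic ∧ f.natDegree = n := by
    intro f hf
    rw [hS] at hf
    obtain ⟨b₁, b₂, hb₁m, hb₁d, hb₂d, rfl⟩ := hf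
    have hPm : (X ^ (n / 2) * g * b₁).Monic := ((monic_X_pow _).mul hg).mul hb₁m
    have hPd : (X ^ (n / 2) * g * b₁).natDegree = n := by
      rw [((monic_X_pow _).mul hg).natDegree_mul hb₁m, (monic_X_pow _).natDegree_mul hg,
        natDegree_X_pow, hb₁d]
      omega
    have hlt : b₂.degree < (X ^ (n / 2) * g * b₁).degree := by
      refine lt_of_lt_of_le hb₂d ?_
      rw [degree_eq_natDegree hg.ne_zero, degree_eq_natDegree hPm.ne_zero, hPd]
      exact_mod_cast (by omega : g.natDegree ≤ n)
    refine ⟨hPm.add_of_left hlt, ?_⟩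
    rw [natDegree_add_eq_left_of_degree_lt hlt]
    exact hPd
  refine ⟨part1, ?_⟩
  intro f hfm hfn
  have hsn : s ≤ n := by omega
  have hns : n - s = n / 2 + g.natDegree := by omega
  set q0 := f /ₘ g with hq0def
  set r := f %ₘ g with hrdef
  have h1 : r + g * q0 = f := modByMonic_add_div f g
  have hdgf : g.degree ≤ f.degree := by
    rw [degree_eq_natDegree hg.ne_zero, degree_eq_natDegree hfm.ne_zero, hfn]
    exact_mod_cast (by omega : g.natDegree ≤ n)
  have hq0m : q0.Monic := by
    unfold Polynomial.Monic
    rw [hq0def, leadingCoeff_divByMonic_of_monic hg hdgf]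
    exact hfm
  have hq0d : q0.natDegree = n - g.natDegree := by
    rw [hq0def, natDegree_divByMonic f hg, hfn]
  have hXm : (X ^ (n / 2) : Polynomial Fq).Monic := monic_X_pow _
  set q1 := q0 /ₘ X ^ (n / 2) with hq1def
  set q2 := q0 %ₘ X ^ (n / 2) with hq2def
  have h2 : q2 + X ^ (n / 2) * q1 = q0 := modByMonic_add_div q0 (X ^ (n / 2))
  have hdX : (X ^ (n / 2) : Polynomial Fq).degree ≤ q0.degree := by
    rw [degree_X_pow, degree_eq_natDegree hq0m.ne_zero, hq0d]
    exact_mod_cast (by omega : n / 2 ≤ n - g.natDegree)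
  have hq1m : q1.Monic := by
    unfold Polynomial.Monic
    rw [hq1def, leadingCoeff_divByMonic_of_monic hXm hdX]
    exact hq0m
  have hq1d : q1.natDegree = s := by
    rw [hq1def, natDegree_divByMonic q0 hXm, hq0d, natDegree_X_pow]
    omega
  have hq2lt : q2.degree < ((n / 2 : ℕ) : WithBot ℕ) := by
    have := degree_modByMonic_lt q0 hXm
    rwa [degree_X_pow] at this
  have hrlt : r.degree < g.degree := degree_modByMonic_lt f hg
  set b := X ^ (n / 2) * g * q1 + r with hbdef
  have hbS : b ∈ S := by
    rw [hS]
    exact ⟨q1, r, hq1m, hq1d, hrlt, rfl⟩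
  have hbP := part1 b hbS
  have hfb : f - b = g * q2 := by
    rw [hbdef]
    linear_combination -h1 - g * h2
  have hreq : Requiv s g f b := by
    rw [requiv_iff hsn g f b hfn hbP.2]
    refine ⟨⟨q2, hfb⟩, ?_⟩
    rw [hfb]
    by_cases hq2 : q2 = 0
    · rw [hq2, mul_zero, degree_zero]
      exact WithBot.bot_lt_coe _
    · have hq2n : q2.natDegree < n / 2 := (natDegree_lt_iff_degree_lt hq2).mpr hq2lt
      have hgq2 : g * q2 ≠ 0 := mul_ne_zero hg.ne_zero hq2
      rw [← natDegree_lt_iff_degree_lt hgq2, natDegree_mul hg.ne_zero hq2]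
      omega
  refine ⟨b, ⟨hbS, hreq⟩, ?_⟩
  rintro b' ⟨hb'S, hb'req⟩
  have hb'P := part1 b' hb'S
  rw [hS] at hb'S
  obtain ⟨c₁, c₂, hc₁m, hc₁d, hc₂d, hb'e⟩ := hb'S
  rw [requiv_iff hsn g f b' hfn hb'P.2] at hb'req
  obtain ⟨hdvd, hdeglt⟩ := hb'req
  have hrc : r - c₂ = (f - b') - g * (q0 - X ^ (n / 2) * c₁) := by
    rw [hb'e]
    linear_combination h1
  have hdvd2 : g ∣ r - c₂ := by
    rw [hrc]
    exact dvd_sub hdvd (dvd_mul_right g _)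
  have hrc0 : r - c₂ = 0 :=
    Polynomial.eq_zero_of_dvd_of_degree_lt hdvd2
      (lt_of_le_of_lt (degree_sub_le r c₂) (max_lt hrlt hc₂d))
  have hc₂ : c₂ = r := (sub_eq_zero.mp hrc0).symm
  have hfb' : f - b' = g * (q0 - X ^ (n / 2) * c₁) := by
    rw [hb'e, hc₂]
    linear_combination -h1
  have hwlt : (q0 - X ^ (n / 2) * c₁).degree < (X ^ (n / 2) : Polynomial Fq).degree := by
    rw [degree_X_pow]
    by_cases hw0 : q0 - X ^ (n / 2) * c₁ = 0
    · rw [hw0, degree_zero]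
      exact WithBot.bot_lt_coe _
    · have hgw : g * (q0 - X ^ (n / 2) * c₁) ≠ 0 := mul_ne_zero hg.ne_zero hw0
      have hlt2 := hdeglt
      rw [hfb', ← natDegree_lt_iff_degree_lt hgw, natDegree_mul hg.ne_zero hw0] at hlt2
      exact (natDegree_lt_iff_degree_lt hw0).mp (by omega)
  have huniq := Polynomial.div_modByMonic_unique c₁ (q0 - X ^ (n / 2) * c₁) hXm
    ⟨by ring, hwlt⟩
  rw [hb'e, hc₂, hbdef, hq1def, ← huniq.1]
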